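/- arXiv:math/0503523 — 2 statements merged into one kernel-verified Lean document; each statement's English description precedes it below -/
import Mathlib

section
/- For every ω ∈ 𝒯 and every μ ∈ 𝒫, and for every probability measure ν on (𝕊 × 2ℕ)² whose two (𝕊 × 2ℕ)-marginals coincide and with ν̂ = μ, one has Î(ν) = I(μ) + H(ν | μ̄); consequently inf{ Î(ν) : ν a probability measure on (𝕊 × 2ℕ)² with ν̂ = μ } = I(μ), and the infimum is attained at ν = μ̄. -/
open Filter Topology
open scoped BigOperators ENNReal

noncomputable section
namespace Copoly

/-- The number of elements of a finite type satisfying a predicate. -/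
def cardOf {α : Type*} [Fintype α] (P : α → Prop) : ℕ :=
  (@Finset.filter _ P (Classical.decPred P) Finset.univ).card

/-- A single step of the simple random walk. -/
def step (b : Bool) : ℤ := if b then 1 else -1

/-- The simple random walk path built from the increments `y`. -/
def walk (y : ℕ → Bool) (x : ℕ) : ℤ := ∑ i ∈ Finset.range x, step (y i)

/-- `sign (S x)`, with the convention `sign (S x) = sign (S (x-1))` when `S x = 0`. -/
def wsign (y : ℕ → Bool) : ℕ → ℤ
  | 0 => 1
  | x + 1 => if walk y (x + 1) = 0 then wsign y x else Int.sign (walk y (x + 1))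

/-- Extension of a finite tuple of increments by `false`. -/
def ext {N : ℕ} (y : Fin N → Bool) : ℕ → Bool :=
  fun i => if h : i < N then y ⟨i, h⟩ else false

/-- The partition function `Z_{N,ω,λ,h} = E[exp (λ ∑_{x=1}^N (ω_x + h) sign (S_x))]`,
written as the exact average over the `2^N` equally likely increment strings. -/
def Zpart (ω : ℕ → ℤ) (lam h : ℝ) (N : ℕ) : ℝ :=
  (1 / 2 : ℝ) ^ N * ∑ y : Fin N → Bool,
    Real.exp (lam * ∑ x ∈ Finset.Icc 1 N, ((ω x : ℝ) + h) * (wsign (ext y) x : ℝ))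

/-- `ω` is centered and `2T`-periodic with `T ≥ 1`. -/
def IsPeriod (ω : ℕ → ℤ) (T : ℕ) : Prop :=
  0 < T ∧ (∀ x, ω (x + 2 * T) = ω x) ∧ ∑ x ∈ Finset.Icc 1 (2 * T), ω x = 0

/-- The class `𝒯` of nontrivial centered periodic sequences with values in `{-1,1}`. -/
def memT (ω : ℕ → ℤ) : Prop :=
  (∀ x, ω x = 1 ∨ ω x = -1) ∧ (∃ T, IsPeriod ω T) ∧
    ¬ (∀ k : ℕ, 1 ≤ k → ω (2 * k - 1) * ω (2 * k) = -1)

/-- `T_ω`, the smallest (half-)period of `ω`. -/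
def Tper (ω : ℕ → ℤ) : ℕ := sInf {T | IsPeriod ω T}

/-- The free energy `f_ω(λ,h)` (the limit defining it exists). -/
def freeEnergy (ω : ℕ → ℤ) (lam h : ℝ) : ℝ :=
  limUnder atTop fun N : ℕ => Real.log (Zpart ω lam h N) / N

/-- `φ_ω(λ,h) = f_ω(λ,h) - λ h`. -/
def phiFE (ω : ℕ → ℤ) (lam h : ℝ) : ℝ := freeEnergy ω lam h - lam * h

/-- `ξ_{α,β} = ∑_{x=2a+1}^{2b} ω_x` for representatives `a ∈ α`, `b ∈ β` with `a < b`. -/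
def xiM (T : ℕ) (ω : ℕ → ℤ) (α β : ZMod T) : ℤ :=
  ∑ x ∈ Finset.Icc (2 * α.val + 1)
      (2 * (if α.val < β.val then β.val else β.val + T)), ω x

/-- `K(x) = P(η = x)`, the law of the first return time to `0` of the walk. -/
def Kret (x : ℕ) : ℝ :=
  if x = 0 then 0 else
    (1 / 2 : ℝ) ^ x * (cardOf fun y : Fin x → Bool =>
      walk (ext y) x = 0 ∧ ∀ z, 0 < z → z < x → walk (ext y) z ≠ 0 : ℕ)

/-- `p_{α,β} = P(η/2 ∈ β - α)`. -/
def pmat (T : ℕ) (α β : ZMod T) : ℝ :=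
  ∑' n : ℕ, if (n : ZMod T) = β - α then Kret (2 * n) else 0

/-- `K_{α,β}(x) = P(η = x | η/2 ∈ β - α)`. -/
def Kcond (T : ℕ) (α β : ZMod T) (x : ℕ) : ℝ :=
  if x % 2 = 0 ∧ ((x / 2 : ℕ) : ZMod T) = β - α then Kret x / pmat T α β else 0

/-- `Φ^{λ,h}_{α,β}(x) = log ((1 + exp (-2(λ ξ_{α,β} + λ h x)))/2)`. -/
def PhiM (T : ℕ) (ω : ℕ → ℤ) (lam h : ℝ) (α β : ZMod T) (x : ℕ) : ℝ :=
  Real.log ((1 + Real.exp (-2 * (lam * (xiM T ω α β : ℝ) + lam * h * x))) / 2)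

/-- The matrix `A_{α,β}(b,λ,h)`. -/
def Amat (T : ℕ) (ω : ℕ → ℤ) (b lam h : ℝ) (α β : ZMod T) : ℝ :=
  pmat T α β * ∑' x : ℕ, Kcond T α β x * Real.exp (PhiM T ω lam h α β x - b * x)

/-- The Perron–Frobenius eigenvalue of a matrix with positive entries: the unique
eigenvalue admitting a strictly positive eigenvector. -/
def PFeig {T : ℕ} (A : ZMod T → ZMod T → ℝ) : ℝ :=
  sSup {r : ℝ | ∃ v : ZMod T → ℝ, (∀ i, 0 < v i) ∧ ∀ i, (∑' j : ZMod T, A i j * v j) = r * v i}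

/-- `Z(b,λ,h)`, the Perron–Frobenius eigenvalue of `A(b,λ,h)`. -/
def Zeig (T : ℕ) (ω : ℕ → ℤ) (b lam h : ℝ) : ℝ := PFeig (Amat T ω b lam h)

open Classical in
/-- `b̃(λ,h)`: the unique `b > 0` solving `Z(b,λ,h) = 1` if it exists, and `0` otherwise. -/
def btilde (T : ℕ) (ω : ℕ → ℤ) (lam h : ℝ) : ℝ :=
  if hb : ∃ b > 0, Zeig T ω b lam h = 1 then hb.choose else 0

/-- The state space `𝕊 × 𝕊 × 2ℕ` (the last coordinate records the even excursion length). -/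
abbrev Sp (T : ℕ) := ZMod T × ZMod T × ℕ

/-- First `𝕊`-marginal of `μ`. -/
def marg1 {T : ℕ} (μ : Sp T → ℝ) (α : ZMod T) : ℝ := ∑' q : ZMod T × ℕ, μ (α, q.1, q.2)

/-- Second `𝕊`-marginal of `μ`. -/
def marg2 {T : ℕ} (μ : Sp T → ℝ) (β : ZMod T) : ℝ := ∑' q : ZMod T × ℕ, μ (q.1, β, q.2)

/-- The set `𝒫`: probability measures on `𝕊 × 𝕊 × 2ℕ` with equal `𝕊`-marginals,
supported on `{(α,β,x) : x ∈ 2ℕ, x/2 ∈ β - α}`. -/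
def memP {T : ℕ} (μ : Sp T → ℝ) : Prop :=
  (∀ p, 0 ≤ μ p) ∧ HasSum μ 1 ∧
    (∀ p : Sp T, μ p ≠ 0 →
      p.2.2 % 2 = 0 ∧ 2 ≤ p.2.2 ∧ ((p.2.2 / 2 : ℕ) : ZMod T) = p.2.1 - p.1) ∧
    ∀ γ, marg1 μ γ = marg2 μ γ

/-- The nonnegative summand `a log (a/c) - a + c` of relative entropy. -/
def klF (a c : ℝ) : ℝ := a * Real.log (a / c) - a + c

/-- Relative entropy `H(μ | ν) ∈ [0,∞]` of two probability measures on a countable space. -/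
def Dkl {T : ℕ} (μ ν : Sp T → ℝ) : ℝ≥0∞ := ∑' p : Sp T, ENNReal.ofReal (klF (μ p) (ν p))

/-- The rate functional `I(μ) = ∑ μ(α,β,x) log (μ(α,β,x)/(μ(α) p_{α,β} K_{α,β}(x))) ∈ [0,∞]`. -/
def Ifun (T : ℕ) (μ : Sp T → ℝ) : ℝ≥0∞ :=
  ∑' p : Sp T,
    ENNReal.ofReal (klF (μ p) (marg1 μ p.1 * pmat T p.1 p.2.1 * Kcond T p.1 p.2.1 p.2.2))

/-- `Q(μ) = ∑ Φ^{λ,h}_{α,β}(x) μ(α,β,x) - I(μ)`, with values in `[-∞,∞)`. -/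
def Qfun (T : ℕ) (ω : ℕ → ℤ) (lam h : ℝ) (μ : Sp T → ℝ) : EReal :=
  ((∑' p : Sp T, PhiM T ω lam h p.1 p.2.1 p.2.2 * μ p : ℝ) : EReal) - (Ifun T μ : EReal)

/-- The measure `μ_b^{λ,h}(α,β,x) = π(α) p_{α,β} K_{α,β}(x) exp(Φ(x) - bx) v_β/(Z v_α)`. -/
def muB (T : ℕ) (ω : ℕ → ℤ) (b lam h : ℝ) (π v : ZMod T → ℝ) (p : Sp T) : ℝ :=
  π p.1 * pmat T p.1 p.2.1 * Kcond T p.1 p.2.1 p.2.2 *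
      Real.exp (PhiM T ω lam h p.1 p.2.1 p.2.2 - b * p.2.2) * v p.2.1 /
    (Zeig T ω b lam h * v p.1)

/-- `v` is a strictly positive right Perron–Frobenius eigenvector of `A(b,λ,h)` and `π` is
the probability left eigenvector (with eigenvalue 1) of the associated stochastic matrix
`(A_{α,β} v_β / (Z v_α))`. -/
def IsPF (T : ℕ) (ω : ℕ → ℤ) (b lam h : ℝ) (π v : ZMod T → ℝ) : Prop :=
  (∀ i, 0 < v i) ∧
    (∀ i, (∑' j : ZMod T, Amat T ω b lam h i j * v j) = Zeig T ω b lam h * v i) ∧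
    (∀ i, 0 ≤ π i) ∧ (∑' i : ZMod T, π i) = 1 ∧
    ∀ j, (∑' i : ZMod T, π i * (Amat T ω b lam h i j * v j / (Zeig T ω b lam h * v i))) = π j

/-- `H̃(μ | ν)`: the difference of relative entropies
`H(μ | ν) - H(μ_1 | ν_1)`, with values in `[-∞,∞]`. -/
def Htil {T : ℕ} (μ ν : Sp T → ℝ) : EReal :=
  (Dkl μ ν : EReal) - ((∑' α : ZMod T, klF (marg1 μ α) (marg1 ν α) : ℝ) : EReal)

open Classical in
/-- `f(b) = ∑_{α,β,x} x μ_b^{λ,h}(α,β,x)` (defined through a choice of the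
Perron–Frobenius data, on which it does not depend). -/
def fmean (T : ℕ) (ω : ℕ → ℤ) (b lam h : ℝ) : ℝ :=
  if hpf : ∃ w : (ZMod T → ℝ) × (ZMod T → ℝ), IsPF T ω b lam h w.1 w.2 then
    ∑' p : Sp T, (p.2.2 : ℝ) * muB T ω b lam h hpf.choose.1 hpf.choose.2 p
  else 0

/-- `Φ̂_{α,β}(x)` from the large-`λ` asymptotics. -/
def PhiHat (T : ℕ) (ω : ℕ → ℤ) (M : ℝ) (α β : ZMod T) (x : ℕ) : ℝ :=
  -Real.log 2 +
    (if xiM T ω α β = -(x : ℤ) then Real.log (1 + Real.exp (2 * M * x)) else 0)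

/-- `Ẑ(M)`, the Perron–Frobenius eigenvalue of `(p_{α,β} ∑_x K_{α,β}(x) exp (Φ̂_{α,β}(x)))`. -/
def Zhat (T : ℕ) (ω : ℕ → ℤ) (M : ℝ) : ℝ :=
  PFeig fun α β : ZMod T => pmat T α β * ∑' x : ℕ, Kcond T α β x * Real.exp (PhiHat T ω M α β x)

/-- The successive return times to `0` of the walk (`sInf ∅ = 0` on the irrelevant
event that the walk does not return). -/
def eta : ℕ → (ℕ → Bool) → ℕ
  | 0, _ => 0
  | k + 1, y => sInf {x | eta k y < x ∧ walk y x = 0}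

/-- Probability measures on `𝕊 × 𝕊 × 2ℕ`, with the topology of weak convergence
(= pointwise convergence on a countable discrete space). -/
abbrev PM (T : ℕ) := {μ : Sp T → ℝ // (∀ p, 0 ≤ μ p) ∧ HasSum μ 1}

/-- The empirical measure `L_m` of `{(α_j, β_j, Δη_j)}_{j<m}` along the path `y`. -/
def LmFun (T : ℕ) (m : ℕ) (y : ℕ → Bool) (p : Sp T) : ℝ :=
  (cardOf fun j : Fin m =>
      ((eta j.val y / 2 : ℕ) : ZMod T) = p.1 ∧
        ((eta (j.val + 1) y / 2 : ℕ) : ZMod T) = p.2.1 ∧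
        eta (j.val + 1) y - eta j.val y = p.2.2 : ℕ) / (m : ℝ)

open Classical in
/-- `P(L_m ∈ A)`: the probability that the `m`-th return to `0` occurs (at some time `n`)
and the empirical measure `L_m` belongs to `A`, written via cylinder sets. -/
def Pevent (T : ℕ) (A : Set (PM T)) (m : ℕ) : ℝ :=
  ∑' n : ℕ, (1 / 2 : ℝ) ^ n *
    (cardOf fun y : Fin n → Bool =>
      eta m (ext y) = n ∧ (∀ j, j < m → eta j (ext y) < eta (j + 1) (ext y)) ∧
        ∃ hpm : (∀ p, 0 ≤ LmFun T m (ext y) p) ∧ HasSum (LmFun T m (ext y)) 1,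
          (⟨LmFun T m (ext y), hpm⟩ : PM T) ∈ A : ℕ)

open Classical in
/-- The rate functional on probability measures: `I(μ)` if `μ ∈ 𝒫` and `+∞` otherwise. -/
def IfullPM {T : ℕ} (μ : PM T) : ℝ≥0∞ := if memP μ.1 then Ifun T μ.1 else ⊤

open Classical in
/-- `log` with values in `[-∞,∞)`: `elog r = -∞` for `r ≤ 0`. -/
def elog (r : ℝ) : EReal := if r ≤ 0 then ⊥ else ((Real.log r : ℝ) : EReal)

/-- The space `(𝕊 × 2ℕ) × (𝕊 × 2ℕ)`. -/
abbrev W (T : ℕ) := (ZMod T × ℕ) × (ZMod T × ℕ)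

/-- The transition kernel `q((α,x),(α',x')) = p_{α,α'} K_{α,α'}(x')`. -/
def qker (T : ℕ) (w w' : ZMod T × ℕ) : ℝ := pmat T w.1 w'.1 * Kcond T w.1 w'.1 w'.2

/-- First marginal of a measure on `(𝕊 × 2ℕ)²`. -/
def nu1 {T : ℕ} (ν : W T → ℝ) (w : ZMod T × ℕ) : ℝ := ∑' w' : ZMod T × ℕ, ν (w, w')

/-- Second marginal of a measure on `(𝕊 × 2ℕ)²`. -/
def nu2 {T : ℕ} (ν : W T → ℝ) (w : ZMod T × ℕ) : ℝ := ∑' w' : ZMod T × ℕ, ν (w', w)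

/-- `ν̂(α,β,x) = ∑_z ν(α,z,β,x)`. -/
def nuHat {T : ℕ} (ν : W T → ℝ) (p : Sp T) : ℝ := ∑' z : ℕ, ν ((p.1, z), (p.2.1, p.2.2))

open Classical in
/-- `Î(ν) = H(ν | ν₁ ⊗ q)` if the two marginals of `ν` coincide, `+∞` otherwise. -/
def Ihat {T : ℕ} (ν : W T → ℝ) : ℝ≥0∞ :=
  if ∀ w, nu1 ν w = nu2 ν w then
    ∑' w : W T, ENNReal.ofReal (klF (ν w) (nu1 ν w.1 * qker T w.1 w.2))
  else ⊤

/-- Relative entropy `H(ν | ρ) ∈ [0,∞]` on `(𝕊 × 2ℕ)²`. -/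
def DklW {T : ℕ} (ν ρ : W T → ℝ) : ℝ≥0∞ := ∑' w : W T, ENNReal.ofReal (klF (ν w) (ρ w))

/-- `μ̄((α,x),(α',x')) = (∑_γ μ(γ,α,x) / ∑_{γ,z} μ(γ,α,z)) μ(α,α',x')`
(with the convention that the value is `0` when the denominator vanishes). -/
def mubar {T : ℕ} (μ : Sp T → ℝ) (w : W T) : ℝ :=
  ((∑' γ : ZMod T, μ (γ, w.1.1, w.1.2)) / marg2 μ w.1.1) * μ (w.1.1, w.2.1, w.2.2)

end Copoly

namespace Copoly

-- klF lemmas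
lemma klF_zero (c : ℝ) : klF 0 c = c := by simp [klF]

lemma klF_self (a : ℝ) : klF a a = 0 := by
  rcases eq_or_ne a 0 with h | h
  · simp [klF, h]
  · simp [klF, div_self h]

lemma klF_nonneg {a c : ℝ} (ha : 0 ≤ a) (hc : 0 < c) : 0 ≤ klF a c := by
  rcases eq_or_lt_of_le ha with h | h
  · simpa [klF, ← h] using hc.le
  · have h1 : Real.log (c / a) ≤ c / a - 1 := Real.log_le_sub_one_of_pos (by positivity)
    have h2 : Real.log (a / c) = - Real.log (c / a) := by
      rw [← Real.log_inv]; congr 1; field_simp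
    have : a - c ≤ a * Real.log (a / c) := by
      rw [h2]
      have := mul_le_mul_of_nonneg_left h1 h.le
      have hca : a * (c / a - 1) = c - a := by field_simp
      nlinarith
    simp only [klF]; linarith

lemma klF_expand {a c : ℝ} : klF a c = a * Real.log (a / c) - a + c := rfl

-- walk lemmas
lemma walk_congr {f g : ℕ → Bool} {x : ℕ} (h : ∀ i, i < x → f i = g i) :
    walk f x = walk g x := by
  unfold walk
  exact Finset.sum_congr rfl fun i hi => by rw [h i (Finset.mem_range.mp hi)]

lemma cardOf_pos {α : Type*} [Fintype α] {P : α → Prop} (h : ∃ a, P a) :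
    0 < cardOf P := by
  obtain ⟨a, ha⟩ := h
  classical
  unfold cardOf
  rw [Finset.card_pos]
  exact ⟨a, Finset.mem_filter.mpr ⟨Finset.mem_univ _, ha⟩⟩

lemma Kret_nonneg (x : ℕ) : 0 ≤ Kret x := by
  unfold Kret; split <;> positivity

lemma Kret_pos {x : ℕ} (hev : x % 2 = 0) (hx : 2 ≤ x) : 0 < Kret x := by
  have hx0 : x ≠ 0 := by omega
  rw [Kret, if_neg hx0]
  have hk : x = 2 * (x / 2) := by omega
  set k := x / 2 with hkdef
  have hk1 : 1 ≤ k := by omega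
  -- witness path: up k steps, down k steps
  set y : Fin x → Bool := fun i => decide (i.val < k) with hy
  have hext : ∀ i, i < x → ext y i = decide (i < k) := by
    intro i hi; simp [ext, hi, hy]
  have hwalk : ∀ z, z ≤ x → walk (ext y) z = if z ≤ k then (z : ℤ) else (x : ℤ) - z := by
    intro z hz
    induction z with
    | zero => simp [walk]
    | succ n ih =>
      have hn : n ≤ x := by omega
      have hstep : walk (ext y) (n + 1) = walk (ext y) n + step (ext y n) := by
        simp [walk, Finset.sum_range_succ]
      rw [hstep, ih hn, hext n (by omega)]
      by_cases hnk : n < k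
      · have h1 : n ≤ k := hnk.le
        have h2 : n + 1 ≤ k := hnk
        simp [step, hnk, h1, h2]
      · have hnk' : ¬ (n + 1 ≤ k) := by omega
        simp only [hnk, decide_eq_true_eq, if_neg hnk, hnk', if_false]
        by_cases hkn : n ≤ k
        · have : n = k := by omega
          simp [step, this, if_pos hkn]
          omega
        · simp [step, if_neg hkn]
          ring
  have hP : walk (ext y) x = 0 ∧ ∀ z, 0 < z → z < x → walk (ext y) z ≠ 0 := by
    constructor
    · rw [hwalk x le_rfl, if_neg (by omega)]; simp
    · intro z hz0 hzx
      rw [hwalk z hzx.le]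
      by_cases hzk : z ≤ k
      · rw [if_pos hzk]; exact_mod_cast hz0.ne'
      · rw [if_neg hzk]
        have : (z : ℤ) < (x : ℤ) := by exact_mod_cast hzx
        omega
  have := cardOf_pos (P := fun y : Fin x → Bool =>
    walk (ext y) x = 0 ∧ ∀ z, 0 < z → z < x → walk (ext y) z ≠ 0) ⟨y, hP⟩
  positivity

-- restriction of walk
lemma walk_ext_restrict {M x : ℕ} (hxM : x ≤ M) (y : Fin M → Bool) {z : ℕ} (hz : z ≤ x) :
    walk (ext fun i : Fin x => y (Fin.castLE hxM i)) z = walk (ext y) z := by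
  apply walk_congr
  intro i hi
  have hix : i < x := lt_of_lt_of_le hi hz
  have hiM : i < M := lt_of_lt_of_le hix hxM
  simp only [ext, dif_pos hix, dif_pos hiM]
  congr 1

/-- `FR x y`: the first return of the walk `y` to 0 occurs exactly at time `x`. -/
def FR (x : ℕ) (y : ℕ → Bool) : Prop :=
  walk y x = 0 ∧ ∀ z, 0 < z → z < x → walk y z ≠ 0

lemma card_FR_split {M x : ℕ} (hxM : x ≤ M) :
    cardOf (fun y : Fin M → Bool => FR x (ext y)) =
      cardOf (fun y : Fin x → Bool => FR x (ext y)) * 2 ^ (M - x) := by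
  classical
  unfold cardOf
  have key : ∀ (y : Fin M → Bool), FR x (ext y) ↔
      FR x (ext fun i : Fin x => y (Fin.castLE hxM i)) := by
    intro y
    unfold FR
    rw [walk_ext_restrict hxM y le_rfl]
    constructor
    · rintro ⟨h1, h2⟩
      exact ⟨h1, fun z hz0 hzx => by rw [walk_ext_restrict hxM y hzx.le]; exact h2 z hz0 hzx⟩
    · rintro ⟨h1, h2⟩
      exact ⟨h1, fun z hz0 hzx => by rw [← walk_ext_restrict hxM y hzx.le]; exact h2 z hz0 hzx⟩
  rw [show (Finset.filter (fun y : Fin x → Bool => FR x (ext y)) Finset.univ).card * 2 ^ (M - x)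
      = ((Finset.filter (fun y : Fin x → Bool => FR x (ext y)) Finset.univ) ×ˢ
        (Finset.univ : Finset (Fin (M - x) → Bool))).card from by
    rw [Finset.card_product, Finset.card_univ, Fintype.card_fun, Fintype.card_bool,
      Fintype.card_fin]]
  refine Finset.card_bij'
    (fun (y : Fin M → Bool) (_ : y ∈ Finset.filter (fun y => FR x (ext y)) Finset.univ) =>
      ((fun i' : Fin x => y (Fin.castLE hxM i'),
        fun j : Fin (M - x) => y ⟨x + j.val, by omega⟩) :
        (Fin x → Bool) × (Fin (M - x) → Bool)))
    (fun uv _ => fun i : Fin M =>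
      if h : i.val < x then uv.1 ⟨i.val, h⟩ else uv.2 ⟨i.val - x, by omega⟩)
    ?_ ?_ ?_ ?_
  · intro y hy
    simp only [Finset.mem_filter, Finset.mem_univ, true_and] at hy
    simp only [Finset.mem_product, Finset.mem_filter, Finset.mem_univ, true_and]
    exact ⟨(key y).mp hy, trivial⟩
  · intro uv huv
    simp only [Finset.mem_product, Finset.mem_filter, Finset.mem_univ, true_and] at huv
    simp only [Finset.mem_filter, Finset.mem_univ, true_and]
    obtain ⟨h1, -⟩ := huv
    rw [key]
    have heq : (fun i' : Fin x =>
        (fun i : Fin M => if h : i.val < x then uv.1 ⟨i.val, h⟩ else uv.2 ⟨i.val - x, by omega⟩)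
          (Fin.castLE hxM i')) = uv.1 := by
      funext i'
      simp only [Fin.castLE]
      rw [dif_pos i'.isLt]
    rw [heq]
    exact h1
  · intro y hy
    funext i
    dsimp only
    by_cases h : i.val < x
    · rw [dif_pos h]
      exact congrArg y (Fin.ext rfl)
    · rw [dif_neg h]
      exact congrArg y (Fin.ext (by simp only []; omega))
  · intro uv huv
    dsimp only
    refine Prod.ext ?_ ?_
    · funext i'
      dsimp only
      rw [dif_pos (show (Fin.castLE hxM i').val < x from i'.isLt)]
      exact congrArg uv.1 (Fin.ext rfl)
    · funext j'
      dsimp only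
      have h : ¬ (x + j'.val < x) := by omega
      rw [dif_neg h]
      exact congrArg uv.2 (Fin.ext (by simp only []; omega))

lemma sum_Kret_le_one (N : ℕ) : ∑ x ∈ Finset.range N, Kret x ≤ 1 := by
  classical
  set M := N with hM
  -- events on Fin M → Bool
  set E : ℕ → Finset (Fin M → Bool) :=
    fun x => Finset.filter (fun y => FR x (ext y)) Finset.univ with hE
  have hEcard : ∀ x ∈ Finset.Ico 1 N, (E x).card =
      cardOf (fun y : Fin x → Bool => FR x (ext y)) * 2 ^ (M - x) := by
    intro x hx
    rw [Finset.mem_Ico] at hx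
    have hxM : x ≤ M := hx.2.le
    rw [← card_FR_split hxM]
    unfold cardOf
    congr 1
  have hdisj : ∀ x ∈ Finset.Ico 1 N, ∀ x' ∈ Finset.Ico 1 N, x ≠ x' →
      Disjoint (E x) (E x') := by
    intro x hx x' hx' hne
    rw [Finset.mem_Ico] at hx hx'
    rw [Finset.disjoint_left]
    intro y hy hy'
    simp only [hE, Finset.mem_filter] at hy hy'
    rcases lt_or_gt_of_ne hne with h | h
    · exact hy'.2.2 x hx.1 h hy.2.1
    · exact hy.2.2 x' hx'.1 h hy'.2.1
  have hsum_card : ∑ x ∈ Finset.Ico 1 N, (E x).card ≤ 2 ^ M := by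
    rw [← Finset.card_biUnion hdisj]
    calc ((Finset.Ico 1 N).biUnion E).card ≤ (Finset.univ : Finset (Fin M → Bool)).card :=
          Finset.card_le_card (Finset.subset_univ _)
      _ = 2 ^ M := by rw [Finset.card_univ, Fintype.card_fun]; simp
  have hrange : ∑ x ∈ Finset.range N, Kret x = ∑ x ∈ Finset.Ico 1 N, Kret x := by
    rw [Finset.range_eq_Ico]
    rcases Nat.eq_zero_or_pos N with h | h
    · simp [h]
    · rw [Finset.sum_eq_sum_Ico_succ_bot h]
      simp [Kret]
  have hterm : ∀ x ∈ Finset.Ico 1 N, Kret x = ((E x).card : ℝ) / 2 ^ M := by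
    intro x hx
    have hxm := hx
    rw [Finset.mem_Ico] at hxm
    have hx0 : x ≠ 0 := by omega
    have hxM : x ≤ M := by omega
    have hkey : (1 / 2 : ℝ) ^ x = 2 ^ (M - x) / 2 ^ M := by
      rw [one_div, inv_pow, inv_eq_one_div, div_eq_div_iff (by positivity) (by positivity),
        one_mul, ← pow_add]
      congr 1
      omega
    have hFR : (cardOf fun y : Fin x → Bool =>
        walk (ext y) x = 0 ∧ ∀ z, 0 < z → z < x → walk (ext y) z ≠ 0) =
        cardOf fun y : Fin x → Bool => FR x (ext y) := rfl
    rw [Kret, if_neg hx0, hEcard x hx, hkey, hFR]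
    push_cast
    ring
  rw [hrange, Finset.sum_congr rfl hterm, ← Finset.sum_div,
    div_le_one (by positivity : (0:ℝ) < 2 ^ M)]
  have : (∑ x ∈ Finset.Ico 1 N, ((E x).card : ℝ)) ≤ ((2 ^ M : ℕ) : ℝ) := by
    exact_mod_cast hsum_card
  simpa using this

lemma summable_Kret : Summable Kret :=
  summable_of_sum_range_le Kret_nonneg sum_Kret_le_one

lemma summable_Kret2 : Summable (fun n => Kret (2 * n)) :=
  summable_Kret.comp_injective fun a b h => by omega

lemma pmat_nonneg (T : ℕ) (α β : ZMod T) : 0 ≤ pmat T α β := by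
  refine tsum_nonneg fun n : ℕ => ?_
  split
  · exact Kret_nonneg _
  · exact le_rfl

lemma Kcond_nonneg (T : ℕ) (α β : ZMod T) (x : ℕ) : 0 ≤ Kcond T α β x := by
  unfold Kcond
  split
  · exact div_nonneg (Kret_nonneg x) (pmat_nonneg T α β)
  · exact le_rfl

lemma Kret_le_pmat {T : ℕ} {α β : ZMod T} {x : ℕ} (hev : x % 2 = 0)
    (hc : ((x / 2 : ℕ) : ZMod T) = β - α) : Kret x ≤ pmat T α β := by
  have hnn : ∀ n : ℕ, 0 ≤ if ((n : ZMod T) = β - α) then Kret (2 * n) else 0 := by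
    intro n
    split
    · exact Kret_nonneg _
    · exact le_rfl
  have hsummable : Summable (fun n : ℕ => if ((n : ZMod T) = β - α) then Kret (2 * n) else 0) := by
    apply Summable.of_nonneg_of_le hnn _ summable_Kret2
    intro n
    split
    · exact le_rfl
    · exact Kret_nonneg _
  have h2 : 2 * (x / 2) = x := by omega
  have hle := Summable.le_tsum hsummable (x / 2) (fun j _ => hnn j)
  rw [if_pos hc, h2] at hle
  exact hle

/-- On the support of `μ ∈ 𝒫`, `p_{α,β} K_{α,β}(x) = K(x) > 0`. -/
lemma qval {T : ℕ} {α β : ZMod T} {x : ℕ} (hev : x % 2 = 0) (hx2 : 2 ≤ x)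
    (hc : ((x / 2 : ℕ) : ZMod T) = β - α) :
    pmat T α β * Kcond T α β x = Kret x ∧ 0 < Kret x := by
  have hK := Kret_pos hev hx2
  have hple := Kret_le_pmat (T := T) (α := α) (β := β) hev hc
  have hp : pmat T α β ≠ 0 := ne_of_gt (lt_of_lt_of_le hK hple)
  constructor
  · rw [Kcond, if_pos ⟨hev, hc⟩, mul_div_cancel₀ _ hp]
  · exact hK


/-- The per-fiber entropy decomposition. -/
lemma perP {G Mα Q : ℝ} {g m : ℕ → ℝ}
    (hg0 : ∀ z, 0 ≤ g z) (hm0 : ∀ z, 0 ≤ m z) (hgm : ∀ z, g z ≤ m z)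
    (hgs : HasSum g G) (hms : HasSum m Mα) (hQ0 : 0 ≤ Q) (hMG : G ≤ Mα)
    (hQpos : G ≠ 0 → 0 < Q) :
    ∑' z, ENNReal.ofReal (klF (g z) (m z * Q)) =
      ENNReal.ofReal (klF G (Mα * Q)) +
        ∑' z, ENNReal.ofReal (klF (g z) (m z / Mα * G)) := by
  rcases eq_or_ne G 0 with hG | hG
  · -- trivial fiber: g ≡ 0
    subst hG
    have hg_zero : g = 0 := (hasSum_zero_iff_of_nonneg hg0).mp hgs
    have h1 : ∀ z, klF (g z) (m z * Q) = m z * Q := by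
      intro z; rw [show g z = 0 from congrFun hg_zero z, klF_zero]
    have h2 : ∀ z, klF (g z) (m z / Mα * 0) = 0 := by
      intro z; rw [show g z = 0 from congrFun hg_zero z, klF_zero, mul_zero]
    calc ∑' z, ENNReal.ofReal (klF (g z) (m z * Q))
        = ∑' z, ENNReal.ofReal (m z * Q) := by
          exact tsum_congr fun z => by rw [h1]
      _ = ENNReal.ofReal (Mα * Q) := by
          rw [← ENNReal.ofReal_tsum_of_nonneg (fun z => mul_nonneg (hm0 z) hQ0)
            ((hms.mul_right Q).summable)]
          congr 1
          exact (hms.mul_right Q).tsum_eq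
      _ = ENNReal.ofReal (klF 0 (Mα * Q)) + ∑' z, ENNReal.ofReal (klF (g z) (m z / Mα * 0)) := by
          rw [klF_zero]
          simp [hg_zero, klF_zero]
  · -- main case
    have hGpos : 0 < G := lt_of_le_of_ne (hgs.nonneg hg0) (Ne.symm hG)
    have hQp : 0 < Q := hQpos hG
    have hMpos : 0 < Mα := lt_of_lt_of_le hGpos hMG
    set L : ℝ := Real.log (G / (Mα * Q)) with hL
    set C : ℝ := Real.log (Mα / G) with hC
    set mb : ℕ → ℝ := fun z => m z / Mα * G with hmb
    set b : ℕ → ℝ := fun z => klF (g z) (mb z) with hb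
    set a : ℕ → ℝ := fun z => klF (g z) (m z * Q) with ha
    have hmb_hasSum : HasSum mb G := by
      have := (hms.div_const Mα).mul_right G
      rwa [div_self hMpos.ne', one_mul] at this
    have key : ∀ z, g z ≠ 0 →
        0 < g z ∧ 0 < m z ∧ 0 < mb z ∧ 0 < m z * Q := by
      intro z hgz
      have h1 : 0 < g z := lt_of_le_of_ne (hg0 z) (Ne.symm hgz)
      have h2 : 0 < m z := lt_of_lt_of_le h1 (hgm z)
      exact ⟨h1, h2, mul_pos (div_pos h2 hMpos) hGpos, mul_pos h2 hQp⟩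
    have hbnn : ∀ z, 0 ≤ b z := by
      intro z
      rcases eq_or_ne (g z) 0 with h | h
      · simp only [hb, hmb, h, klF_zero]
        exact mul_nonneg (div_nonneg (hm0 z) hMpos.le) hGpos.le
      · exact klF_nonneg (hg0 z) (key z h).2.2.1
    have hann : ∀ z, 0 ≤ a z := by
      intro z
      rcases eq_or_ne (g z) 0 with h | h
      · simp only [ha, h, klF_zero]
        exact mul_nonneg (hm0 z) hQ0
      · exact klF_nonneg (hg0 z) (key z h).2.2.2
    have hble : ∀ z, b z ≤ g z * C - g z + mb z := by
      intro z
      rcases eq_or_ne (g z) 0 with h | h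
      · simp [hb, h, klF_zero]
      · obtain ⟨h1, h2, h3, -⟩ := key z h
        have hdiv : g z / mb z ≤ Mα / G := by
          have hrw : g z / mb z = (g z / m z) * (Mα / G) := by
            simp only [hmb]
            field_simp
          rw [hrw]
          have hle1 : g z / m z ≤ 1 := div_le_one_of_le₀ (hgm z) h2.le
          exact mul_le_of_le_one_left (by positivity) hle1
        have hlog : Real.log (g z / mb z) ≤ C := Real.log_le_log (by positivity) hdiv
        simp only [hb, klF]
        have := mul_le_mul_of_nonneg_left hlog (hg0 z)
        linarith
    have hbsummable : Summable b :=
      Summable.of_nonneg_of_le hbnn hble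
        (((hgs.summable.mul_right C).sub hgs.summable).add hmb_hasSum.summable)
    set B : ℝ := ∑' z, b z with hB
    have hBsum : HasSum b B := hbsummable.hasSum
    have hpt : ∀ z, a z = b z + g z * L + (m z * Q - mb z) := by
      intro z
      rcases eq_or_ne (g z) 0 with h | h
      · simp only [ha, hb, h, klF_zero]
        ring
      · obtain ⟨h1, h2, h3, h4⟩ := key z h
        have e1 : Real.log (g z / (m z * Q)) =
            Real.log (g z) - (Real.log (m z) + Real.log Q) := by
          rw [Real.log_div h (by positivity), Real.log_mul h2.ne' hQp.ne']
        have e2 : Real.log (g z / mb z) =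
            Real.log (g z) - (Real.log (m z) - Real.log Mα + Real.log G) := by
          rw [Real.log_div h h3.ne', hmb]
          dsimp only
          rw [Real.log_mul (by positivity) hG, Real.log_div h2.ne' hMpos.ne']
        have e3 : L = Real.log G - (Real.log Mα + Real.log Q) := by
          rw [hL, Real.log_div hG (by positivity), Real.log_mul hMpos.ne' hQp.ne']
        simp only [ha, hb, klF]
        rw [e1, e2, e3]
        ring
    have hasummable : Summable a := by
      have : a = fun z => b z + g z * L + (m z * Q - mb z) := funext hpt
      rw [this]
      exact ((hbsummable.add (hgs.summable.mul_right L)).add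
        ((hms.summable.mul_right Q).sub hmb_hasSum.summable))
    have haval : HasSum a (B + G * L + (Mα * Q - G)) := by
      have : a = fun z => b z + g z * L + (m z * Q - mb z) := funext hpt
      rw [this]
      exact (hBsum.add (hgs.mul_right L)).add ((hms.mul_right Q).sub hmb_hasSum)
    have hBnn : 0 ≤ B := tsum_nonneg hbnn
    have hkl : klF G (Mα * Q) = G * L - G + Mα * Q := by rw [klF, hL]
    calc ∑' z, ENNReal.ofReal (a z)
        = ENNReal.ofReal (B + G * L + (Mα * Q - G)) := by
          rw [← ENNReal.ofReal_tsum_of_nonneg hann hasummable, haval.tsum_eq]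
      _ = ENNReal.ofReal (klF G (Mα * Q) + B) := by
          rw [hkl]; ring_nf
      _ = ENNReal.ofReal (klF G (Mα * Q)) + ENNReal.ofReal B := by
          rw [ENNReal.ofReal_add (klF_nonneg hGpos.le (by positivity)) hBnn]
      _ = ENNReal.ofReal (klF G (Mα * Q)) + ∑' z, ENNReal.ofReal (b z) := by
          rw [← ENNReal.ofReal_tsum_of_nonneg hbnn hbsummable]

/-- for `μ ∈ 𝒫` and every probability measure `ν` on `(𝕊 × 2ℕ)²` with equal
marginals and `ν̂ = μ`, `Î(ν) = I(μ) + H(ν | μ̄)`; hence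
`inf { Î(ν) : ν̂ = μ } = I(μ)`, attained at `ν = μ̄`. -/
theorem stmt14 (ω : ℕ → ℤ) (hω : memT ω) (μ : Sp (Tper ω) → ℝ) (hμ : memP μ) :
    (∀ ν : W (Tper ω) → ℝ, (∀ w, 0 ≤ ν w) → HasSum ν 1 →
        (∀ w, nu1 ν w = nu2 ν w) → (∀ p, nuHat ν p = μ p) →
        Ihat ν = Ifun (Tper ω) μ + DklW ν (mubar μ)) ∧
      (⨅ ν : {ν : W (Tper ω) → ℝ //
          (∀ w, 0 ≤ ν w) ∧ HasSum ν 1 ∧ ∀ p, nuHat ν p = μ p},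
        Ihat ν.1) = Ifun (Tper ω) μ ∧
      (∀ w, 0 ≤ mubar μ w) ∧ HasSum (mubar μ) 1 ∧ (∀ p, nuHat (mubar μ) p = μ p) ∧
      Ihat (mubar μ) = Ifun (Tper ω) μ := by
  classical
  obtain ⟨-, ⟨S0, hS0⟩, -⟩ := hω
  have hne : {S | IsPeriod ω S}.Nonempty := ⟨S0, hS0⟩
  have hTmem : IsPeriod ω (Tper ω) := Nat.sInf_mem hne
  haveI : NeZero (Tper ω) := ⟨hTmem.1.ne'⟩
  obtain ⟨hμ0, hμ1, hsupp, hmarg⟩ := hμ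
  have hμsummable : Summable μ := hμ1.summable
  set m : ZMod (Tper ω) × ℕ → ℝ := fun w => ∑' γ : ZMod (Tper ω), μ (γ, w.1, w.2) with hmdef
  -- the reindexing equivalence
  set e : (Sp (Tper ω) × ℕ) ≃ W (Tper ω) :=
    ⟨fun u => ((u.1.1, u.2), (u.1.2.1, u.1.2.2)),
     fun w => ((w.1.1, w.2.1, w.2.2), w.1.2),
     fun u => rfl, fun w => rfl⟩ with hedef
  have reindex : ∀ F : W (Tper ω) → ℝ≥0∞,
      ∑' w : W (Tper ω), F w = ∑' p : Sp (Tper ω), ∑' z : ℕ, F ((p.1, z), (p.2.1, p.2.2)) := by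
    intro F
    rw [← e.tsum_eq F, ENNReal.tsum_prod']
    rfl
  -- basic facts about m and the marginals of μ
  have hm0 : ∀ w, 0 ≤ m w := fun w => tsum_nonneg fun γ => hμ0 _
  have hmM : ∀ α : ZMod (Tper ω), HasSum (fun z : ℕ => m (α, z)) (marg2 μ α) := by
    intro α
    have h1 : Summable (fun q : ZMod (Tper ω) × ℕ => μ (q.1, α, q.2)) := by
      apply hμsummable.comp_injective
      intro a b h
      obtain ⟨a1, a2⟩ := a; obtain ⟨b1, b2⟩ := b
      simp only [Function.comp, Prod.mk.injEq] at h ⊢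
      exact ⟨h.1, h.2.2⟩
    have h2 : HasSum (fun q : ZMod (Tper ω) × ℕ => μ (q.1, α, q.2)) (marg2 μ α) := h1.hasSum
    have h3 : HasSum (fun p : ℕ × ZMod (Tper ω) => μ (p.2, α, p.1)) (marg2 μ α) :=
      (Equiv.prodComm ℕ (ZMod (Tper ω))).hasSum_iff.mpr h2
    exact h3.prod_fiberwise fun z => Summable.of_finite.hasSum
  have hμ_le_marg1 : ∀ (α β : ZMod (Tper ω)) (x : ℕ), μ (α, β, x) ≤ marg1 μ α := by
    intro α β x
    have h1 : Summable (fun q : ZMod (Tper ω) × ℕ => μ (α, q.1, q.2)) := by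
      apply hμsummable.comp_injective
      intro a b h
      obtain ⟨a1, a2⟩ := a; obtain ⟨b1, b2⟩ := b
      simp only [Function.comp, Prod.mk.injEq] at h ⊢
      exact ⟨h.2.1, h.2.2⟩
    exact Summable.le_tsum h1 (β, x) fun j _ => hμ0 _
  have hM0 : ∀ α : ZMod (Tper ω), 0 ≤ marg2 μ α := fun α => tsum_nonneg fun q => hμ0 _
  have hm_le_M : ∀ (α : ZMod (Tper ω)) (z : ℕ), m (α, z) ≤ marg2 μ α :=
    fun α z => le_hasSum (hmM α) z fun j _ => hm0 _
  have hMzero : ∀ α : ZMod (Tper ω), marg2 μ α = 0 → ∀ (β : ZMod (Tper ω)) (x : ℕ), μ (α, β, x) = 0 := by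
    intro α h β x
    have h1 := hμ_le_marg1 α β x
    rw [hmarg α, h] at h1
    exact le_antisymm h1 (hμ0 _)
  -- facts about mubar
  have hmub_eq : ∀ (α β : ZMod (Tper ω)) (z x : ℕ),
      mubar μ ((α, z), (β, x)) = m (α, z) / marg2 μ α * μ (α, β, x) := fun _ _ _ _ => rfl
  have hmub0 : ∀ w, 0 ≤ mubar μ w := by
    rintro ⟨⟨α, z⟩, β, x⟩
    rw [hmub_eq]
    exact mul_nonneg (div_nonneg (hm0 _) (hM0 α)) (hμ0 _)
  have hmub_slice : ∀ (α β : ZMod (Tper ω)) (x : ℕ),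
      HasSum (fun z : ℕ => mubar μ ((α, z), (β, x))) (μ (α, β, x)) := by
    intro α β x
    rcases eq_or_ne (marg2 μ α) 0 with hM | hM
    · have h0 : (fun z : ℕ => mubar μ ((α, z), (β, x))) = fun _ => (0 : ℝ) := by
        funext z
        rw [hmub_eq, hMzero α hM β x, mul_zero]
      rw [h0, hMzero α hM β x]
      exact hasSum_zero
    · have h1 := ((hmM α).div_const (marg2 μ α)).mul_right (μ (α, β, x))
      rw [div_self hM, one_mul] at h1
      simpa only [hmub_eq] using h1
  have hmubHat : ∀ p : Sp (Tper ω), nuHat (mubar μ) p = μ p := by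
    rintro ⟨α, β, x⟩
    exact (hmub_slice α β x).tsum_eq
  have hmub_comp : Summable (fun u : Sp (Tper ω) × ℕ => mubar μ (e u)) := by
    apply (summable_prod_of_nonneg
      (f := fun u : Sp (Tper ω) × ℕ => mubar μ (e u)) (fun u => hmub0 _)).mpr
    constructor
    · rintro ⟨α, β, x⟩
      exact (hmub_slice α β x).summable
    · apply hμsummable.congr
      rintro ⟨α, β, x⟩
      exact ((hmub_slice α β x).tsum_eq).symm
  have hmub_summ : Summable (mubar μ) := e.summable_iff.mp hmub_comp
  have hmub_has : HasSum (mubar μ) 1 := by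
    rw [hmub_summ.hasSum_iff]
    calc ∑' w : W (Tper ω), mubar μ w
        = ∑' u : Sp (Tper ω) × ℕ, mubar μ (e u) := (e.tsum_eq (mubar μ)).symm
      _ = ∑' (p : Sp (Tper ω)), ∑' (z : ℕ), mubar μ (e (p, z)) :=
          Summable.tsum_prod' hmub_comp
            (fun p => by rcases p with ⟨α, β, x⟩; exact (hmub_slice α β x).summable)
      _ = ∑' p : Sp (Tper ω), μ p := by
          apply tsum_congr
          rintro ⟨α, β, x⟩
          exact (hmub_slice α β x).tsum_eq
      _ = 1 := hμ1.tsum_eq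
  have hmub_nu1 : ∀ w, nu1 (mubar μ) w = m w := by
    rintro ⟨α, z⟩
    have h1 : ∀ w' : ZMod (Tper ω) × ℕ,
        mubar μ ((α, z), w') = m (α, z) / marg2 μ α * μ (α, w'.1, w'.2) := by
      rintro ⟨β, x⟩
      exact hmub_eq α β z x
    calc nu1 (mubar μ) (α, z)
        = ∑' w' : ZMod (Tper ω) × ℕ, m (α, z) / marg2 μ α * μ (α, w'.1, w'.2) := tsum_congr h1
      _ = m (α, z) / marg2 μ α * marg1 μ α := tsum_mul_left
      _ = m (α, z) := by
          rcases eq_or_ne (marg2 μ α) 0 with hM | hM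
          · have hmz : m (α, z) = 0 := le_antisymm (hM ▸ hm_le_M α z) (hm0 _)
            rw [hmz]
            simp
          · rw [hmarg α, div_mul_cancel₀ _ hM]
  have hmub_nu2 : ∀ w, nu2 (mubar μ) w = m w := by
    rintro ⟨β, x⟩
    have hsummable : Summable (fun w' : ZMod (Tper ω) × ℕ => mubar μ (w', (β, x))) := by
      apply hmub_summ.comp_injective
      intro a b h
      simpa using h
    calc nu2 (mubar μ) (β, x)
        = ∑' (α : ZMod (Tper ω)), ∑' (z : ℕ), mubar μ ((α, z), (β, x)) :=
          Summable.tsum_prod' hsummable fun α => (hmub_slice α β x).summable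
      _ = ∑' α : ZMod (Tper ω), μ (α, β, x) := tsum_congr fun α => (hmub_slice α β x).tsum_eq
      _ = m (β, x) := rfl
  have hmub_marg : ∀ w, nu1 (mubar μ) w = nu2 (mubar μ) w := fun w => by
    rw [hmub_nu1 w, hmub_nu2 w]
  -- Part 1
  have hpart1 : ∀ ν : W (Tper ω) → ℝ, (∀ w, 0 ≤ ν w) → HasSum ν 1 →
      (∀ w, nu1 ν w = nu2 ν w) → (∀ p, nuHat ν p = μ p) →
      Ihat ν = Ifun (Tper ω) μ + DklW ν (mubar μ) := by
    intro ν hν0 hν1 hνm hνhat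
    have hνsumm : Summable ν := hν1.summable
    have hg_has : ∀ (α β : ZMod (Tper ω)) (x : ℕ),
        HasSum (fun z : ℕ => ν ((α, z), (β, x))) (μ (α, β, x)) := by
      intro α β x
      have h1 : Summable (fun z : ℕ => ν ((α, z), (β, x))) := by
        apply hνsumm.comp_injective
        intro a b h
        simpa using h
      have h2 := h1.hasSum
      rwa [show (∑' z : ℕ, ν ((α, z), (β, x))) = μ (α, β, x) from hνhat (α, β, x)] at h2
    have hnu2m : ∀ w, nu2 ν w = m w := by
      rintro ⟨α, z⟩
      have hsummable : Summable (fun w' : ZMod (Tper ω) × ℕ => ν (w', (α, z))) := by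
        apply hνsumm.comp_injective
        intro a b h
        simpa using h
      calc nu2 ν (α, z)
          = ∑' (γ : ZMod (Tper ω)), ∑' (z' : ℕ), ν ((γ, z'), (α, z)) :=
            Summable.tsum_prod' hsummable fun γ => (hg_has γ α z).summable
        _ = ∑' γ : ZMod (Tper ω), μ (γ, α, z) := tsum_congr fun γ => (hg_has γ α z).tsum_eq
        _ = m (α, z) := rfl
    have hnu1m : ∀ w, nu1 ν w = m w := fun w => (hνm w).trans (hnu2m w)
    have hν_le : ∀ (α β : ZMod (Tper ω)) (z x : ℕ), ν ((α, z), (β, x)) ≤ m (α, z) := by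
      intro α β z x
      have h1 : Summable (fun w' : ZMod (Tper ω) × ℕ => ν ((α, z), w')) := by
        apply hνsumm.comp_injective
        intro a b h
        simpa using h
      calc ν ((α, z), (β, x)) ≤ nu1 ν (α, z) := Summable.le_tsum h1 (β, x) fun j _ => hν0 _
        _ = m (α, z) := hnu1m _
    -- per-fiber computation
    have hperp : ∀ p : Sp (Tper ω),
        (∑' z : ℕ, ENNReal.ofReal
          (klF (ν ((p.1, z), (p.2.1, p.2.2))) (m (p.1, z) * qker (Tper ω) (p.1, z) (p.2.1, p.2.2)))) =
        ENNReal.ofReal (klF (μ p)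
          (marg1 μ p.1 * pmat (Tper ω) p.1 p.2.1 * Kcond (Tper ω) p.1 p.2.1 p.2.2)) +
        ∑' z : ℕ, ENNReal.ofReal
          (klF (ν ((p.1, z), (p.2.1, p.2.2))) (mubar μ ((p.1, z), (p.2.1, p.2.2)))) := by
      rintro ⟨α, β, x⟩
      dsimp only
      have hQ0 : 0 ≤ pmat (Tper ω) α β * Kcond (Tper ω) α β x :=
        mul_nonneg (pmat_nonneg (Tper ω) α β) (Kcond_nonneg (Tper ω) α β x)
      have hQpos : μ (α, β, x) ≠ 0 → 0 < pmat (Tper ω) α β * Kcond (Tper ω) α β x := by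
        intro h
        obtain ⟨hev, hx2, hc⟩ := hsupp (α, β, x) h
        obtain ⟨hq, hk⟩ := qval hev hx2 hc
        rw [hq]
        exact hk
      have hMG : μ (α, β, x) ≤ marg2 μ α := (hμ_le_marg1 α β x).trans (le_of_eq (hmarg α))
      have := perP (G := μ (α, β, x)) (Mα := marg2 μ α)
        (Q := pmat (Tper ω) α β * Kcond (Tper ω) α β x)
        (g := fun z => ν ((α, z), (β, x))) (m := fun z => m (α, z))
        (fun z => hν0 _) (fun z => hm0 _) (fun z => hν_le α β z x)
        (hg_has α β x) (hmM α) hQ0 hMG hQpos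
      rw [hmarg α, mul_assoc]
      exact this
    -- assemble
    unfold Ihat
    rw [if_pos hνm]
    calc ∑' w : W (Tper ω), ENNReal.ofReal (klF (ν w) (nu1 ν w.1 * qker (Tper ω) w.1 w.2))
        = ∑' w : W (Tper ω), ENNReal.ofReal (klF (ν w) (m w.1 * qker (Tper ω) w.1 w.2)) :=
          tsum_congr fun w => by rw [hnu1m w.1]
      _ = ∑' p : Sp (Tper ω), ∑' z : ℕ, ENNReal.ofReal
            (klF (ν ((p.1, z), (p.2.1, p.2.2)))
              (m (p.1, z) * qker (Tper ω) (p.1, z) (p.2.1, p.2.2))) :=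
          reindex _
      _ = ∑' p : Sp (Tper ω),
            (ENNReal.ofReal (klF (μ p)
              (marg1 μ p.1 * pmat (Tper ω) p.1 p.2.1 * Kcond (Tper ω) p.1 p.2.1 p.2.2)) +
            ∑' z : ℕ, ENNReal.ofReal
              (klF (ν ((p.1, z), (p.2.1, p.2.2))) (mubar μ ((p.1, z), (p.2.1, p.2.2))))) :=
          tsum_congr hperp
      _ = Ifun (Tper ω) μ + DklW ν (mubar μ) := by
          rw [ENNReal.tsum_add]
          congr 1
          rw [DklW, reindex]
  -- conclusion about mubar
  have hIhat_mub : Ihat (mubar μ) = Ifun (Tper ω) μ := by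
    rw [hpart1 (mubar μ) hmub0 hmub_has hmub_marg hmubHat]
    have : DklW (mubar μ) (mubar μ) = 0 := by
      simp [DklW, klF_self]
    rw [this, add_zero]
  refine ⟨hpart1, ?_, hmub0, hmub_has, hmubHat, hIhat_mub⟩
  apply le_antisymm
  · exact iInf_le_of_le ⟨mubar μ, hmub0, hmub_has, hmubHat⟩ (le_of_eq hIhat_mub)
  · apply le_iInf
    rintro ⟨ν, hν0', hν1', hνhat'⟩
    by_cases hm' : ∀ w, nu1 ν w = nu2 ν w
    · rw [hpart1 ν hν0' hν1' hm' hνhat']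
      exact le_self_add
    · simp only [Ihat, if_neg hm']
      exact le_top

end Copoly
end
end

section
/- For every ω ∈ 𝒯 and every h ≥ 1, the function λ ↦ φ_ω(λ,h) is nonincreasing on [0,∞). -/
open Filter Topology
open scoped BigOperators ENNReal

noncomputable section
namespace Copoly


/-! ### Auxiliary lemmas for stmt18 -/

lemma wsign_pm (y : ℕ → Bool) : ∀ x, wsign y x = 1 ∨ wsign y x = -1 := by
  intro x
  induction x with
  | zero => left; rfl
  | succ n ih =>
    by_cases hw : walk y (n + 1) = 0
    · simpa [wsign, hw] using ih
    · rcases lt_trichotomy (walk y (n + 1)) 0 with hlt | heq | hgt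
      · right; simp [wsign, hw, Int.sign_eq_neg_one_iff_neg.mpr hlt]
      · exact absurd heq hw
      · left; simp [wsign, hw, Int.sign_eq_one_iff_pos.mpr hgt]

lemma wsign_eq_one (y : ℕ → Bool) : ∀ x, (∀ z, z ≤ x → 0 ≤ walk y z) → wsign y x = 1 := by
  intro x
  induction x with
  | zero => intro _; rfl
  | succ n ih =>
    intro hz
    by_cases hw : walk y (n + 1) = 0
    · simp only [wsign, hw, if_true]
      exact ih fun z hzn => hz z (hzn.trans (Nat.le_succ n))
    · have hpos : 0 < walk y (n + 1) := lt_of_le_of_ne (hz _ le_rfl) (Ne.symm hw)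
      simp [wsign, hw, Int.sign_eq_one_iff_pos.mpr hpos]

lemma ext_lt {N : ℕ} (y : Fin N → Bool) {i : ℕ} (hi : i < N) : ext y i = y ⟨i, hi⟩ :=
  dif_pos hi

open Classical in
/-- Increment strings whose walk stays nonnegative. -/
def goodSet (N : ℕ) : Finset (Fin N → Bool) :=
  Finset.univ.filter fun y => ∀ x, x ≤ N → 0 ≤ walk (ext y) x

open Classical in
/-- Increment strings whose walk is a bridge. -/
def bridgeSet (N : ℕ) : Finset (Fin N → Bool) :=
  Finset.univ.filter fun y => walk (ext y) N = 0

lemma rot_walk {N : ℕ} (hN : 0 < N) (y : Fin N → Bool) {m : ℕ} (hm : m ≤ N)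
    {x : ℕ} (hx : x ≤ N) :
    walk (ext fun i : Fin N => y ⟨(i.val + m) % N, Nat.mod_lt _ hN⟩) x =
      if x ≤ N - m then walk (ext y) (m + x) - walk (ext y) m
      else walk (ext y) N - walk (ext y) m + walk (ext y) (x - (N - m)) := by
  have key : walk (ext fun i : Fin N => y ⟨(i.val + m) % N, Nat.mod_lt _ hN⟩) x
      = ∑ i ∈ Finset.range x, step (ext y ((i + m) % N)) := by
    refine Finset.sum_congr rfl fun i hi => ?_
    have hiN : i < N := lt_of_lt_of_le (Finset.mem_range.mp hi) hx
    rw [ext_lt _ hiN, ext_lt _ (Nat.mod_lt _ hN)]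
  have base : ∀ u, u ≤ N - m →
      ∑ i ∈ Finset.range u, step (ext y ((i + m) % N))
        = walk (ext y) (m + u) - walk (ext y) m := by
    intro u hu
    have h1 : ∀ i ∈ Finset.range u, step (ext y ((i + m) % N)) = step (ext y (m + i)) := by
      intro i hi
      have hi' : i < u := Finset.mem_range.mp hi
      have him : i + m < N := by omega
      rw [Nat.mod_eq_of_lt him, Nat.add_comm]
    have h2 : walk (ext y) (m + u)
        = walk (ext y) m + ∑ i ∈ Finset.range u, step (ext y (m + i)) := by
      unfold walk
      rw [← Finset.sum_range_add_sum_Ico _ (Nat.le_add_right m u),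
        Finset.sum_Ico_eq_sum_range, Nat.add_sub_cancel_left]
    rw [Finset.sum_congr rfl h1, h2]
    ring
  by_cases hxm : x ≤ N - m
  · rw [key, if_pos hxm, base x hxm]
  · rw [key, if_neg hxm]
    have hkx : N - m ≤ x := by omega
    have hm1 : 1 ≤ m := by omega
    rw [← Finset.sum_range_add_sum_Ico _ hkx, base (N - m) le_rfl,
      Finset.sum_Ico_eq_sum_range]
    have hmN : m + (N - m) = N := by omega
    have h3 : ∀ i ∈ Finset.range (x - (N - m)),
        step (ext y ((N - m + i + m) % N)) = step (ext y i) := by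
      intro i hi
      have hi' : i < x - (N - m) := Finset.mem_range.mp hi
      have hNi : N - m + i + m = N + i := by omega
      rw [hNi, Nat.add_mod_left, Nat.mod_eq_of_lt (by omega)]
    rw [Finset.sum_congr rfl h3, hmN]
    rfl

lemma rot_nonneg {N : ℕ} (hN : 0 < N) (y : Fin N → Bool) {m : ℕ} (hm : m ≤ N)
    (hmin : ∀ x, x ≤ N → walk (ext y) m ≤ walk (ext y) x)
    (hb : walk (ext y) N = 0) :
    ∀ x, x ≤ N → 0 ≤ walk (ext fun i : Fin N => y ⟨(i.val + m) % N, Nat.mod_lt _ hN⟩) x := by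
  intro x hx
  rw [rot_walk hN y hm hx]
  by_cases hxm : x ≤ N - m
  · rw [if_pos hxm]
    have h1 := hmin (m + x) (by omega)
    linarith
  · rw [if_neg hxm]
    have h1 := hmin (x - (N - m)) (by omega)
    rw [hb]
    linarith

lemma bridge_card_le {N : ℕ} (hN : 0 < N) :
    (bridgeSet N).card ≤ (N + 1) * (goodSet N).card := by
  classical
  have hsurj : Set.SurjOn
      (fun p : Fin (N + 1) × (Fin N → Bool) =>
        fun i : Fin N => p.2 ⟨(i.val + p.1.val) % N, Nat.mod_lt _ hN⟩)
      ((Finset.univ ×ˢ goodSet N) : Finset (Fin (N + 1) × (Fin N → Bool)))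
      (bridgeSet N) := by
    intro y hy
    have hyb : walk (ext y) N = 0 := by
      have := Finset.mem_coe.mp hy
      simpa [bridgeSet] using this
    obtain ⟨m, hmmem, hmin⟩ :=
      Finset.exists_min_image (Finset.range (N + 1)) (fun u => walk (ext y) u) ⟨0, by simp⟩
    have hm : m ≤ N := by
      have := Finset.mem_range.mp hmmem; omega
    refine ⟨(⟨N - m, by omega⟩, fun i : Fin N => y ⟨(i.val + m) % N, Nat.mod_lt _ hN⟩), ?_, ?_⟩
    · refine Finset.mem_coe.mpr (Finset.mem_product.mpr ⟨Finset.mem_univ _, ?_⟩)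
      simp only [goodSet, Finset.mem_filter, Finset.mem_univ, true_and]
      exact rot_nonneg hN y hm (fun u hu => hmin u (Finset.mem_range.mpr (by omega))) hyb
    · funext i
      show y ⟨((i.val + (N - m)) % N + m) % N, _⟩ = y i
      congr 1
      apply Fin.ext
      show ((i.val + (N - m)) % N + m) % N = i.val
      rw [Nat.mod_add_mod]
      have hiv : i.val + (N - m) + m = i.val + N := by omega
      rw [hiv, Nat.add_mod_right, Nat.mod_eq_of_lt i.isLt]
  calc (bridgeSet N).card ≤ (Finset.univ ×ˢ goodSet N).card :=
        Finset.card_le_card_of_surjOn _ hsurj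
    _ = (N + 1) * (goodSet N).card := by
        rw [Finset.card_product, Finset.card_univ, Fintype.card_fin]

lemma walk_ext_count {N : ℕ} (y : Fin N → Bool) :
    walk (ext y) N = 2 * (((Finset.univ.filter fun i => y i = true).card : ℤ)) - N := by
  classical
  have h1 : walk (ext y) N = ∑ i : Fin N, step (y i) := by
    unfold walk
    rw [← Fin.sum_univ_eq_sum_range fun i => step (ext y i)]
    refine Finset.sum_congr rfl fun i _ => ?_
    rw [ext_lt y i.isLt]
  have h2 : ∀ b : Bool, step b = 2 * (if b = true then (1 : ℤ) else 0) - 1 := by decide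
  rw [h1]
  calc ∑ i : Fin N, step (y i)
      = ∑ i : Fin N, (2 * (if y i = true then (1 : ℤ) else 0) - 1) :=
        Finset.sum_congr rfl fun i _ => h2 (y i)
    _ = 2 * ∑ i : Fin N, (if y i = true then (1 : ℤ) else 0) - N := by
        rw [Finset.sum_sub_distrib, ← Finset.mul_sum]
        simp
    _ = _ := by rw [Finset.sum_boole]

lemma bridge_card (n : ℕ) : (bridgeSet (2 * n)).card = (2 * n).choose n := by
  classical
  have hcard : (bridgeSet (2 * n)).card
      = (Finset.powersetCard n (Finset.univ : Finset (Fin (2 * n)))).card := by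
    refine Finset.card_bij'
      (fun (y : Fin (2 * n) → Bool) (_ : y ∈ bridgeSet (2 * n)) =>
        Finset.univ.filter fun i => y i = true)
      (fun (s : Finset (Fin (2 * n))) (_ : s ∈ Finset.powersetCard n Finset.univ) =>
        fun i => decide (i ∈ s)) ?_ ?_ ?_ ?_
    · intro y hy
      rw [Finset.mem_powersetCard]
      refine ⟨Finset.filter_subset _ _, ?_⟩
      have hw : walk (ext y) (2 * n) = 0 := by
        simpa [bridgeSet] using hy
      rw [walk_ext_count] at hw
      set c := (Finset.univ.filter fun i : Fin (2 * n) => y i = true).card with hc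
      omega
    · intro s hs
      obtain ⟨-, hcs⟩ := Finset.mem_powersetCard.mp hs
      simp only [bridgeSet, Finset.mem_filter, Finset.mem_univ, true_and]
      rw [walk_ext_count]
      have : (Finset.univ.filter fun i : Fin (2 * n) => decide (i ∈ s) = true) = s := by
        ext i; simp
      rw [this, hcs]
      omega
    · intro y hy
      funext i
      by_cases hyi : y i <;> simp [hyi]
    · intro s hs
      ext i; simp
  rw [hcard, Finset.card_powersetCard, Finset.card_univ, Fintype.card_fin]

lemma good_zero : (goodSet 0).card = 1 := by
  classical
  have h1 : (goodSet 0) = Finset.univ := by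
    rw [goodSet]
    refine Finset.filter_true_of_mem fun y _ => ?_
    intro x hx
    have : x = 0 := Nat.le_zero.mp hx
    subst this
    simp [walk]
  rw [h1, Finset.card_univ]
  simp

lemma goodSet_le_succ (N : ℕ) : (goodSet N).card ≤ (goodSet (N + 1)).card := by
  classical
  refine Finset.card_le_card_of_injOn
    (fun y (i : Fin (N + 1)) => if h : i.val < N then y ⟨i.val, h⟩ else true) ?_ ?_
  · intro y hy
    simp only [goodSet, Finset.mem_coe, Finset.mem_filter, Finset.mem_univ, true_and] at hy ⊢
    have hagree : ∀ j, j < N →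
        ext (fun i : Fin (N+1) => if h : i.val < N then y ⟨i.val, h⟩ else true) j = ext y j := by
      intro j hj
      rw [ext_lt _ (show j < N + 1 by omega), ext_lt _ hj]
      simp [hj]
    have hwalk : ∀ x, x ≤ N →
        walk (ext fun i : Fin (N+1) => if h : i.val < N then y ⟨i.val, h⟩ else true) x
          = walk (ext y) x := by
      intro x hx
      unfold walk
      refine Finset.sum_congr rfl fun i hi => ?_
      rw [hagree i (lt_of_lt_of_le (Finset.mem_range.mp hi) hx)]
    intro x hx
    rcases Nat.lt_or_ge x (N + 1) with h1 | h1
    · rw [hwalk x (by omega)]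
      exact hy x (by omega)
    · have hxN : x = N + 1 := by omega
      subst hxN
      have hsplit : walk (ext fun i : Fin (N+1) => if h : i.val < N then y ⟨i.val, h⟩ else true) (N + 1)
          = walk (ext fun i : Fin (N+1) => if h : i.val < N then y ⟨i.val, h⟩ else true) N
            + step (ext (fun i : Fin (N+1) => if h : i.val < N then y ⟨i.val, h⟩ else true) N) := by
        unfold walk
        rw [Finset.sum_range_succ]
      have hlast : ext (fun i : Fin (N+1) => if h : i.val < N then y ⟨i.val, h⟩ else true) N = true := by
        rw [ext_lt _ (Nat.lt_succ_self N)]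
        simp
      rw [hsplit, hlast, hwalk N le_rfl]
      have := hy N le_rfl
      simp only [step]
      norm_num
      linarith
  · intro y hy y' hy' heq
    funext i
    have := congrFun heq ⟨i.val, by omega⟩
    simpa [i.isLt] using this

lemma four_pow_le_good (n : ℕ) : 4 ^ n ≤ (2 * n + 1) ^ 2 * (goodSet (2 * n)).card := by
  rcases Nat.eq_zero_or_pos n with rfl | hn
  · simp [good_zero]
  · have h1 := Nat.four_pow_le_two_mul_add_one_mul_central_binom n
    have h2 := bridge_card_le (N := 2 * n) (by omega)
    rw [bridge_card] at h2
    calc 4 ^ n ≤ (2 * n + 1) * (2 * n).choose n := h1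
      _ ≤ (2 * n + 1) * ((2 * n + 1) * (goodSet (2 * n)).card) := Nat.mul_le_mul_left _ h2
      _ = (2 * n + 1) ^ 2 * (goodSet (2 * n)).card := by ring

lemma two_pow_le_good (N : ℕ) : 2 ^ N ≤ 2 * (N + 1) ^ 2 * (goodSet N).card := by
  rcases Nat.even_or_odd N with ⟨n, hn⟩ | ⟨n, hn⟩
  · have hN : N = 2 * n := by omega
    subst hN
    calc 2 ^ (2 * n) = 4 ^ n := by rw [pow_mul]; norm_num
      _ ≤ (2 * n + 1) ^ 2 * (goodSet (2 * n)).card := four_pow_le_good n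
      _ ≤ 2 * ((2 * n + 1) ^ 2 * (goodSet (2 * n)).card) :=
          Nat.le_mul_of_pos_left _ (by omega)
      _ = 2 * (2 * n + 1) ^ 2 * (goodSet (2 * n)).card := by ring
  · have hN : N = 2 * n + 1 := hn
    subst hN
    calc 2 ^ (2 * n + 1) = 4 ^ n * 2 := by rw [pow_succ, pow_mul]; norm_num
      _ ≤ ((2 * n + 1) ^ 2 * (goodSet (2 * n)).card) * 2 :=
          Nat.mul_le_mul_right _ (four_pow_le_good n)
      _ ≤ ((2 * n + 1 + 1) ^ 2 * (goodSet (2 * n + 1)).card) * 2 :=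
          Nat.mul_le_mul_right _
            (Nat.mul_le_mul (Nat.pow_le_pow_left (by omega) 2) (goodSet_le_succ (2 * n)))
      _ = 2 * (2 * n + 1 + 1) ^ 2 * (goodSet (2 * n + 1)).card := by ring


lemma logmono {a b : ℝ} (ha : 0 < a) (hab : a ≤ b) : Real.log a ≤ Real.log b := by
  have hb : 0 < b := lt_of_lt_of_le ha hab
  rw [← Real.exp_le_exp, Real.exp_log ha, Real.exp_log hb]
  exact hab

lemma Zpart_pos (ω : ℕ → ℤ) (lam h : ℝ) (N : ℕ) : 0 < Zpart ω lam h N := by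
  unfold Zpart
  exact mul_pos (by positivity)
    (Finset.sum_pos (fun y _ => Real.exp_pos _) Finset.univ_nonempty)

lemma Zpart_le (ω : ℕ → ℤ) {lam h : ℝ} (hω : ∀ x, ω x = 1 ∨ ω x = -1) (hh : 1 ≤ h)
    (hlam : 0 ≤ lam) (N : ℕ) :
    Zpart ω lam h N ≤ Real.exp (lam * ∑ x ∈ Finset.Icc 1 N, ((ω x : ℝ) + h)) := by
  have hterm : ∀ y : Fin N → Bool,
      lam * ∑ x ∈ Finset.Icc 1 N, ((ω x : ℝ) + h) * (wsign (ext y) x : ℝ)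
        ≤ lam * ∑ x ∈ Finset.Icc 1 N, ((ω x : ℝ) + h) := by
    intro y
    refine mul_le_mul_of_nonneg_left (Finset.sum_le_sum fun x _ => ?_) hlam
    have h0 : 0 ≤ (ω x : ℝ) + h := by
      rcases hω x with h1 | h1 <;> rw [h1] <;> push_cast <;> linarith
    have h1 : (wsign (ext y) x : ℝ) ≤ 1 := by
      rcases wsign_pm (ext y) x with h2 | h2 <;> rw [h2] <;> norm_num
    calc ((ω x : ℝ) + h) * (wsign (ext y) x : ℝ) ≤ ((ω x : ℝ) + h) * 1 :=
          mul_le_mul_of_nonneg_left h1 h0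
      _ = _ := mul_one _
  unfold Zpart
  calc (1/2 : ℝ) ^ N * ∑ y : Fin N → Bool,
        Real.exp (lam * ∑ x ∈ Finset.Icc 1 N, ((ω x : ℝ) + h) * (wsign (ext y) x : ℝ))
      ≤ (1/2 : ℝ) ^ N * ∑ _y : Fin N → Bool,
        Real.exp (lam * ∑ x ∈ Finset.Icc 1 N, ((ω x : ℝ) + h)) := by
        refine mul_le_mul_of_nonneg_left
          (Finset.sum_le_sum fun y _ => Real.exp_le_exp.mpr (hterm y)) (by positivity)
    _ = Real.exp (lam * ∑ x ∈ Finset.Icc 1 N, ((ω x : ℝ) + h)) := by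
        rw [Finset.sum_const, Finset.card_univ]
        have hcard : Fintype.card (Fin N → Bool) = 2 ^ N := by simp
        rw [hcard, nsmul_eq_mul, ← mul_assoc]
        push_cast
        rw [show (1/2 : ℝ) ^ N * 2 ^ N = 1 by rw [← mul_pow]; norm_num, one_mul]

lemma Zpart_ge (ω : ℕ → ℤ) (lam h : ℝ) (N : ℕ) :
    ((goodSet N).card : ℝ) * ((1/2 : ℝ) ^ N *
        Real.exp (lam * ∑ x ∈ Finset.Icc 1 N, ((ω x : ℝ) + h))) ≤ Zpart ω lam h N := by
  classical
  unfold Zpart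
  have hgood : ∀ y ∈ goodSet N,
      Real.exp (lam * ∑ x ∈ Finset.Icc 1 N, ((ω x : ℝ) + h) * (wsign (ext y) x : ℝ))
        = Real.exp (lam * ∑ x ∈ Finset.Icc 1 N, ((ω x : ℝ) + h)) := by
    intro y hy
    simp only [goodSet, Finset.mem_filter, Finset.mem_univ, true_and] at hy
    congr 2
    refine Finset.sum_congr rfl fun x hx => ?_
    have hx2 : x ≤ N := (Finset.mem_Icc.mp hx).2
    rw [wsign_eq_one (ext y) x fun z hz => hy z (hz.trans hx2)]
    simp
  have h1 : ∑ y ∈ goodSet N,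
        Real.exp (lam * ∑ x ∈ Finset.Icc 1 N, ((ω x : ℝ) + h) * (wsign (ext y) x : ℝ))
      ≤ ∑ y : Fin N → Bool,
        Real.exp (lam * ∑ x ∈ Finset.Icc 1 N, ((ω x : ℝ) + h) * (wsign (ext y) x : ℝ)) := by
    refine Finset.sum_le_sum_of_subset_of_nonneg ?_ fun _ _ _ => (Real.exp_pos _).le
    intro z hz
    exact Finset.mem_univ z
  have h2 : ∑ y ∈ goodSet N,
        Real.exp (lam * ∑ x ∈ Finset.Icc 1 N, ((ω x : ℝ) + h) * (wsign (ext y) x : ℝ))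
      = ((goodSet N).card : ℝ)
          * Real.exp (lam * ∑ x ∈ Finset.Icc 1 N, ((ω x : ℝ) + h)) := by
    rw [Finset.sum_congr rfl hgood, Finset.sum_const, nsmul_eq_mul]
  have h3 : ((goodSet N).card : ℝ) * Real.exp (lam * ∑ x ∈ Finset.Icc 1 N, ((ω x : ℝ) + h))
      ≤ ∑ y : Fin N → Bool,
        Real.exp (lam * ∑ x ∈ Finset.Icc 1 N, ((ω x : ℝ) + h) * (wsign (ext y) x : ℝ)) :=
    h2 ▸ h1
  calc ((goodSet N).card : ℝ) * ((1/2 : ℝ) ^ N *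
          Real.exp (lam * ∑ x ∈ Finset.Icc 1 N, ((ω x : ℝ) + h)))
      = (1/2 : ℝ) ^ N * (((goodSet N).card : ℝ) *
          Real.exp (lam * ∑ x ∈ Finset.Icc 1 N, ((ω x : ℝ) + h))) := by ring
    _ ≤ _ := mul_le_mul_of_nonneg_left h3 (by positivity)

lemma Ioc_zero_eq_Icc_one (N : ℕ) : Finset.Ioc 0 N = Finset.Icc 1 N := by
  rw [← Finset.Icc_add_one_left_eq_Ioc, zero_add]

lemma sum_omega_shift (ω : ℕ → ℤ) {T : ℕ} (hT : IsPeriod ω T) (n : ℕ) :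
    ∑ x ∈ Finset.Ioc 0 (n + 2 * T), ω x = ∑ x ∈ Finset.Ioc 0 n, ω x := by
  obtain ⟨hTpos, hper, hsum⟩ := hT
  have hwin : ∀ k, ∑ x ∈ Finset.Ioc k (k + 2 * T), ω x = 0 := by
    intro k
    induction k with
    | zero =>
      rw [show (0 : ℕ) + 2 * T = 2 * T by omega, Ioc_zero_eq_Icc_one]
      exact hsum
    | succ j ih =>
      have e1 : ∑ x ∈ Finset.Ioc j (j + 2 * T), ω x
          = ω (j + 1) + ∑ x ∈ Finset.Ioc (j + 1) (j + 2 * T), ω x := by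
        rw [← Finset.sum_Ioc_consecutive (fun x => ω x) (Nat.le_succ j) (by omega)]
        rw [Nat.Ioc_succ_singleton, Finset.sum_singleton]
      have e2 : ∑ x ∈ Finset.Ioc (j + 1) (j + 1 + 2 * T), ω x
          = ∑ x ∈ Finset.Ioc (j + 1) (j + 2 * T), ω x + ω (j + 2 * T + 1) := by
        rw [show j + 1 + 2 * T = (j + 2 * T) + 1 by omega,
          Finset.sum_Ioc_succ_top (by omega)]
      have e3 : ω (j + 2 * T + 1) = ω (j + 1) := by
        rw [show j + 2 * T + 1 = (j + 1) + 2 * T by omega]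
        exact hper (j + 1)
      rw [e2, e3]
      rw [e1] at ih
      linarith
  rw [← Finset.sum_Ioc_consecutive (fun x => ω x) (Nat.zero_le n) (by omega), hwin n, add_zero]

lemma sum_omega_bound (ω : ℕ → ℤ) (hω1 : ∀ x, ω x = 1 ∨ ω x = -1) {T : ℕ}
    (hT : IsPeriod ω T) : ∀ N, |∑ x ∈ Finset.Icc 1 N, ω x| ≤ 2 * (T : ℤ) := by
  intro N
  induction N using Nat.strong_induction_on with
  | _ N ih =>
    rcases le_or_gt N (2 * T) with hN | hN
    · calc |∑ x ∈ Finset.Icc 1 N, ω x| ≤ ∑ x ∈ Finset.Icc 1 N, |ω x| :=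
            Finset.abs_sum_le_sum_abs _ _
        _ ≤ ∑ _x ∈ Finset.Icc 1 N, 1 := by
            refine Finset.sum_le_sum fun x _ => ?_
            rcases hω1 x with h | h <;> simp [h]
        _ = (N : ℤ) := by rw [Finset.sum_const, Nat.card_Icc]; simp
        _ ≤ 2 * (T : ℤ) := by exact_mod_cast hN
    · have hrw : N = (N - 2 * T) + 2 * T := by
        have := hT.1; omega
      rw [← Ioc_zero_eq_Icc_one, hrw, sum_omega_shift ω hT, Ioc_zero_eq_Icc_one]
      exact ih _ (by have := hT.1; omega)

lemma good_card_pos (N : ℕ) : 0 < (goodSet N).card := by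
  by_contra hcon
  have hzero : (goodSet N).card = 0 := by omega
  have h2 := two_pow_le_good N
  rw [hzero, mul_zero] at h2
  exact absurd h2 (pow_pos (by norm_num : (0:ℕ) < 2) N).not_ge

lemma tendsto_logZ (ω : ℕ → ℤ) (hω : memT ω) {h : ℝ} (hh : 1 ≤ h) {lam : ℝ}
    (hlam : 0 ≤ lam) :
    Tendsto (fun N : ℕ => Real.log (Zpart ω lam h N) / N) atTop (𝓝 (lam * h)) := by
  obtain ⟨hω1, ⟨T, hT⟩, -⟩ := hω
  set C : ℕ → ℝ := fun N => ∑ x ∈ Finset.Icc 1 N, (ω x : ℝ) with hC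
  have hCbound : ∀ N, |C N| ≤ 2 * (T : ℝ) := by
    intro N
    have h1 := sum_omega_bound ω hω1 hT N
    have hcast : C N = ((∑ x ∈ Finset.Icc 1 N, ω x : ℤ) : ℝ) := by
      rw [hC]; push_cast; rfl
    rw [hcast, ← Int.cast_abs]
    exact_mod_cast h1
  have hS : ∀ N : ℕ, ∑ x ∈ Finset.Icc 1 N, ((ω x : ℝ) + h) = C N + N * h := by
    intro N
    rw [Finset.sum_add_distrib, Finset.sum_const, Nat.card_Icc, nsmul_eq_mul]
    simp [hC]
  have hup : ∀ N : ℕ, Real.log (Zpart ω lam h N) ≤ lam * (C N + N * h) := by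
    intro N
    rw [← hS]
    exact (Real.log_le_iff_le_exp (Zpart_pos ω lam h N)).mpr (Zpart_le ω hω1 hh hlam N)
  have hlow : ∀ N : ℕ,
      lam * (C N + N * h) - Real.log (2 * ((N : ℝ) + 1) ^ 2) ≤ Real.log (Zpart ω lam h N) := by
    intro N
    have hZ := Zpart_ge ω lam h N
    rw [hS] at hZ
    have hcpos : (0 : ℝ) < ((goodSet N).card : ℝ) := by exact_mod_cast good_card_pos N
    have hlog1 : Real.log (((goodSet N).card : ℝ) *
          ((1/2 : ℝ) ^ N * Real.exp (lam * (C N + N * h))))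
        = Real.log ((goodSet N).card : ℝ) + N * Real.log (1/2 : ℝ) + lam * (C N + N * h) := by
      rw [Real.log_mul (ne_of_gt hcpos) (by positivity),
        Real.log_mul (by positivity) (Real.exp_ne_zero _), Real.log_pow, Real.log_exp]
      ring
    have hcardlog : N * Real.log 2 - Real.log (2 * ((N : ℝ) + 1) ^ 2)
        ≤ Real.log ((goodSet N).card : ℝ) := by
      have hle : (2 : ℝ) ^ N ≤ 2 * ((N : ℝ) + 1) ^ 2 * ((goodSet N).card : ℝ) := by
        have := two_pow_le_good N
        exact_mod_cast this
      have hlog2 := logmono (by positivity) hle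
      rw [Real.log_mul (by positivity) (ne_of_gt hcpos), Real.log_pow] at hlog2
      linarith
    have hhalf : Real.log (1/2 : ℝ) = - Real.log 2 := by
      rw [one_div, Real.log_inv]
    have hstep : lam * (C N + N * h) - Real.log (2 * ((N : ℝ) + 1) ^ 2)
        ≤ Real.log (((goodSet N).card : ℝ) *
            ((1/2 : ℝ) ^ N * Real.exp (lam * (C N + N * h)))) := by
      rw [hlog1, hhalf]
      linarith
    exact hstep.trans (logmono (by positivity) hZ)
  have tC : Tendsto (fun N : ℕ => lam * C N / N) atTop (𝓝 0) := by
    refine squeeze_zero_norm' ?_ (tendsto_const_div_atTop_nhds_zero_nat (|lam| * (2 * T)))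
    filter_upwards [eventually_ge_atTop 1] with N hN
    have hNpos : (0 : ℝ) < N := by exact_mod_cast hN
    rw [Real.norm_eq_abs, abs_div, abs_mul, abs_of_pos hNpos]
    gcongr
    exact hCbound N

  have tLog : Tendsto (fun N : ℕ => Real.log (2 * ((N : ℝ) + 1) ^ 2) / N) atTop (𝓝 0) := by
    have h1 : Tendsto (fun x : ℝ => Real.log x / x) atTop (𝓝 0) := by
      have := Real.isLittleO_log_id_atTop.tendsto_div_nhds_zero
      simpa using this
    have h2 : Tendsto (fun N : ℕ => ((N : ℝ) + 1)) atTop atTop :=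
      tendsto_atTop_add_const_right _ 1 tendsto_natCast_atTop_atTop
    have h3 : Tendsto (fun N : ℕ => Real.log ((N : ℝ) + 1) / ((N : ℝ) + 1)) atTop (𝓝 0) :=
      h1.comp h2
    have h4 : Tendsto (fun N : ℕ => ((N : ℝ) + 1) / N) atTop (𝓝 1) := by
      have hbase : Tendsto (fun N : ℕ => 1 + 1 / (N : ℝ)) atTop (𝓝 (1 + 0)) :=
        tendsto_const_nhds.add tendsto_one_div_atTop_nhds_zero_nat
      rw [add_zero] at hbase
      refine Tendsto.congr' ?_ hbase
      filter_upwards [eventually_ge_atTop 1] with N hN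
      have hNpos : (0 : ℝ) < N := by exact_mod_cast hN
      field_simp
    have h5 : Tendsto (fun N : ℕ => Real.log ((N : ℝ) + 1) / N) atTop (𝓝 0) := by
      have hmul := h3.mul h4
      rw [zero_mul] at hmul
      refine Tendsto.congr' ?_ hmul
      filter_upwards [eventually_ge_atTop 1] with N hN
      have hNpos : (0 : ℝ) < N := by exact_mod_cast hN
      have hN1 : ((N : ℝ) + 1) ≠ 0 := by positivity
      field_simp
    have h6 : Tendsto (fun N : ℕ => Real.log 2 / N + 2 * (Real.log ((N : ℝ) + 1) / N))
        atTop (𝓝 (0 + 2 * 0)) :=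
      (tendsto_const_div_atTop_nhds_zero_nat _).add (h5.const_mul 2)
    rw [show (0 : ℝ) + 2 * 0 = 0 by ring] at h6
    refine Tendsto.congr ?_ h6
    intro N
    rw [Real.log_mul two_ne_zero (by positivity), Real.log_pow]
    push_cast
    ring
  have tlower : Tendsto
      (fun N : ℕ => lam * h + lam * C N / N - Real.log (2 * ((N : ℝ) + 1) ^ 2) / N)
      atTop (𝓝 (lam * h)) := by
    have := (tendsto_const_nhds (x := lam * h) (f := atTop (α := ℕ))).add tC |>.sub tLog
    simpa using this
  have tupper : Tendsto (fun N : ℕ => lam * h + lam * C N / N) atTop (𝓝 (lam * h)) := by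
    have := (tendsto_const_nhds (x := lam * h) (f := atTop (α := ℕ))).add tC
    simpa using this
  refine tendsto_of_tendsto_of_tendsto_of_le_of_le' tlower tupper ?_ ?_
  · filter_upwards [eventually_ge_atTop 1] with N hN
    have hNpos : (0 : ℝ) < N := by exact_mod_cast hN
    rw [le_div_iff₀ hNpos]
    calc (lam * h + lam * C N / N - Real.log (2 * ((N : ℝ) + 1) ^ 2) / N) * N
        = lam * (C N + N * h) - Real.log (2 * ((N : ℝ) + 1) ^ 2) := by
          field_simp
          ring
      _ ≤ Real.log (Zpart ω lam h N) := hlow N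
  · filter_upwards [eventually_ge_atTop 1] with N hN
    have hNpos : (0 : ℝ) < N := by exact_mod_cast hN
    rw [div_le_iff₀ hNpos]
    calc Real.log (Zpart ω lam h N) ≤ lam * (C N + N * h) := hup N
      _ = (lam * h + lam * C N / N) * N := by
          field_simp
          ring

lemma phi_zero (ω : ℕ → ℤ) (hω : memT ω) {h : ℝ} (hh : 1 ≤ h) {lam : ℝ}
    (hlam : 0 ≤ lam) : phiFE ω lam h = 0 := by
  have hfe : freeEnergy ω lam h = lam * h :=
    (tendsto_logZ ω hω hh hlam).limUnder_eq
  rw [phiFE, hfe, sub_self]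

/-- for `h ≥ 1`, `λ ↦ φ_ω(λ,h)` is nonincreasing on `[0,∞)`. -/
theorem stmt18 (ω : ℕ → ℤ) (hω : memT ω) (h : ℝ) (hh : 1 ≤ h) :
    AntitoneOn (fun lam : ℝ => phiFE ω lam h) (Set.Ici 0) := by
  intro a ha b hb _
  show phiFE ω b h ≤ phiFE ω a h
  rw [phi_zero ω hω hh (Set.mem_Ici.mp hb), phi_zero ω hω hh (Set.mem_Ici.mp ha)]

end Copoly
end
end
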